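/- Let (D_1,…,D_s) be a finite family of subsets of a finite set E, let M be the transversal matroid on E presented by this family, and let n(X) = {i : X ∩ D_i ≠ ∅} for X ⊆ E. If C is a circuit of M with r(C) = k (so |C| = k + 1), then |n(C)| = k, and moreover |n(C − x)| = k for every x ∈ C. -/

import Mathlib

open Set
open scoped Matroid

namespace LPM

variable {α β : Type*}

/-- `I` is a partial transversal of the set family `N`: there is an injection
matching each element of `I` to an index of a member of the family containing it. -/
def IsPT {ι : Type*} (N : ι → Set α) (I : Set α) : Prop :=
  ∃ f : I → ι, Function.Injective f ∧ ∀ x : I, (x : α) ∈ N (f x)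

/-- `I` is a (full) transversal of the set family `N`: there is a bijection
matching each element of `I` to an index of a member of the family containing it. -/
def IsT {ι : Type*} (N : ι → Set α) (I : Set α) : Prop :=
  ∃ f : I → ι, Function.Bijective f ∧ ∀ x : I, (x : α) ∈ N (f x)

/-- A lattice path presentation with nullity `m` and rank `r`: a sequence of
intervals `[l i, g i] ⊆ {1, …, m + r}` whose left endpoints strictly increase
and whose right endpoints strictly increase. -/
structure LPP (m r : ℕ) where
  l : Fin r → ℕ
  g : Fin r → ℕ
  l_strictMono : StrictMono l
  g_strictMono : StrictMono g
  one_le_l : ∀ i, 1 ≤ l i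
  l_le_g : ∀ i, l i ≤ g i
  g_le : ∀ i, g i ≤ m + r

/-- The intervals of a lattice path presentation. -/
def LPP.N {m r : ℕ} (P : LPP m r) (i : Fin r) : Set ℕ := Set.Icc (P.l i) (P.g i)

/-- `M` is the lattice path matroid `M[N]` of the presentation `P`: the ground set
is `{1, …, m + r}` and the independent sets are exactly the partial transversals
of the intervals of `P`. -/
def IsLPMOf {m r : ℕ} (P : LPP m r) (M : Matroid ℕ) : Prop :=
  M.E = Set.Icc 1 (m + r) ∧
    ∀ I : Set ℕ, M.Indep I ↔ I ⊆ Set.Icc 1 (m + r) ∧ IsPT P.N I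

/-- `M` is isomorphic to `M'`: there is a bijection between the ground sets
carrying independent sets to independent sets in both directions. -/
def IsoTo (M : Matroid α) (M' : Matroid β) : Prop :=
  ∃ f : α → β, Set.BijOn f M.E M'.E ∧ ∀ I ⊆ M.E, (M.Indep I ↔ M'.Indep (f '' I))

/-- A lattice path matroid: a matroid isomorphic to `M[N]` for some lattice path
presentation (presentations with `r = 0` give the rank-zero matroids). -/
def IsLPMatroid (M : Matroid α) : Prop :=
  ∃ (m r : ℕ) (P : LPP m r) (M₀ : Matroid ℕ), IsLPMOf P M₀ ∧ IsoTo M M₀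

/-- A circuit of a matroid: a minimal dependent subset of the ground set. -/
def Circuit (M : Matroid α) (C : Set α) : Prop :=
  C ⊆ M.E ∧ ¬ M.Indep C ∧ ∀ D : Set α, D ⊂ C → M.Indep D

/-- A matroid is connected if every two distinct elements of the ground set lie
in a common circuit. -/
def Connected (M : Matroid α) : Prop :=
  ∀ x ∈ M.E, ∀ y ∈ M.E, x ≠ y → ∃ C, Circuit M C ∧ x ∈ C ∧ y ∈ C

/-- The rank of a set in a matroid: the supremum of the cardinalities of its
independent subsets. -/
noncomputable def rk (M : Matroid α) (X : Set α) : ℕ :=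
  sSup {n | ∃ I, I ⊆ X ∧ M.Indep I ∧ I.ncard = n}

/-- A nontrivial connected flat: a flat that is dependent and whose restriction
is a connected matroid. -/
def NTConnFlat (M : Matroid α) (X : Set α) : Prop :=
  M.IsFlat X ∧ ¬ M.Indep X ∧ Connected (M ↾ X)

/-- Deletion of a set from a matroid. -/
def delete (M : Matroid α) (D : Set α) : Matroid α := M ↾ (M.E \ D)

/-- Contraction of a set in a matroid, defined via duality. -/
def contract (M : Matroid α) (C : Set α) : Matroid α := (delete M✶ C)✶

/-- `Minor M' M` means that `M'` is obtained from `M` by a sequence of deletions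
and contractions. -/
inductive Minor : Matroid α → Matroid α → Prop
  | refl (M : Matroid α) : Minor M M
  | del {M' M : Matroid α} (D : Set α) (h : Minor M' M) : Minor (delete M' D) M
  | con {M' M : Matroid α} (C : Set α) (h : Minor M' M) : Minor (contract M' C) M

end LPM

open LPM in
/-- If `C` is a circuit of rank `k` of the transversal matroid
presented by `(D 0, …, D (s-1))` on a finite set `E`, then `|n(C)| = k` and
`|n(C − x)| = k` for every `x ∈ C`, where `n(X) = {i : X ∩ D i ≠ ∅}`. -/
theorem stmt10 {α : Type*} {s : ℕ} (E : Set α) (hEfin : E.Finite)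
    (D : Fin s → Set α) (hDE : ∀ i, D i ⊆ E)
    (M : Matroid α) (hME : M.E = E)
    (hMI : ∀ I : Set α, M.Indep I ↔ I ⊆ E ∧ IsPT D I)
    (C : Set α) (hC : Circuit M C) (k : ℕ) (hk : rk M C = k) :
    {i : Fin s | (C ∩ D i).Nonempty}.ncard = k ∧
      ∀ x ∈ C, {i : Fin s | ((C \ {x}) ∩ D i).Nonempty}.ncard = k := by
  classical
  have hCE : C ⊆ E := hME ▸ hC.1
  have hCfin : C.Finite := hEfin.subset hCE
  have hCdep := hC.2.1
  -- the empty set is independent, so C is nonempty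
  have hCne : C.Nonempty := by
    rcases C.eq_empty_or_nonempty with h | h
    · exfalso
      apply hCdep
      rw [hMI]
      rw [h]
      refine ⟨Set.empty_subset E, ⟨fun x => (Set.notMem_empty _ x.2).elim,
        fun a => (Set.notMem_empty _ a.2).elim, fun x => (Set.notMem_empty _ x.2).elim⟩⟩
    · exact h
  -- a partial transversal I satisfies |I| ≤ |n(I)|
  have keyge : ∀ I : Set α, IsPT D I → I.ncard ≤ {i : Fin s | (I ∩ D i).Nonempty}.ncard := by
    rintro I ⟨f, hfinj, hfmem⟩
    have hsub : Set.range f ⊆ {i : Fin s | (I ∩ D i).Nonempty} := by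
      rintro i ⟨x, rfl⟩
      exact ⟨x, x.2, hfmem x⟩
    have hr : (Set.range f).ncard = I.ncard := by
      rw [← Nat.card_coe_set_eq, Nat.card_range_of_injective hfinj,
        Nat.card_coe_set_eq]
    calc I.ncard = (Set.range f).ncard := hr.symm
      _ ≤ _ := Set.ncard_le_ncard hsub (Set.toFinite _)
  -- proper subsets of C are independent, hence partial transversals
  have hPT : ∀ S : Set α, S ⊂ C → IsPT D S := by
    intro S hS
    exact ((hMI S).mp (hC.2.2 S hS)).2
  -- Hall's theorem: since C is not a partial transversal, |n(C)| < |C|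
  have hnCle : {i : Fin s | (C ∩ D i).Nonempty}.ncard < C.ncard := by
    have hft : Fintype ↥C := hCfin.fintype
    set t : ↥C → Finset (Fin s) := fun x => Finset.univ.filter (fun i => (x : α) ∈ D i)
      with ht
    have hnotPT : ¬ IsPT D C := by
      intro hpt
      exact hCdep ((hMI C).mpr ⟨hCE, hpt⟩)
    have hhall : ¬ ∀ s' : Finset ↥C, s'.card ≤ (s'.biUnion t).card := by
      intro hcond
      obtain ⟨f, hfinj, hfmem⟩ :=
        (Finset.all_card_le_biUnion_card_iff_exists_injective t).mp hcond
      refine hnotPT ⟨f, hfinj, fun x => ?_⟩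
      have := hfmem x
      simpa [ht] using this
    push_neg at hhall
    obtain ⟨s', hs'⟩ := hhall
    set S : Set α := (fun x : ↥C => (x : α)) '' (s' : Set ↥C) with hSdef
    have hSsub : S ⊆ C := by rintro x ⟨y, _, rfl⟩; exact y.2
    have hScard : S.ncard = s'.card := by
      rw [hSdef, Set.ncard_image_of_injective _ Subtype.val_injective,
        Set.ncard_coe_finset]
    have hnsub : {i : Fin s | (S ∩ D i).Nonempty} ⊆ ↑(s'.biUnion t) := by
      rintro i ⟨x, hxS, hxD⟩
      obtain ⟨y, hy, rfl⟩ := hxS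
      simp only [Finset.coe_biUnion, Set.mem_iUnion]
      exact ⟨y, hy, by simp [ht, hxD]⟩
    have hnScard : {i : Fin s | (S ∩ D i).Nonempty}.ncard ≤ (s'.biUnion t).card := by
      calc {i : Fin s | (S ∩ D i).Nonempty}.ncard
          ≤ (↑(s'.biUnion t) : Set (Fin s)).ncard :=
            Set.ncard_le_ncard hnsub (Set.toFinite _)
        _ = (s'.biUnion t).card := Set.ncard_coe_finset _
    rcases eq_or_ne S C with hSC | hSC
    · calc {i : Fin s | (C ∩ D i).Nonempty}.ncard
          ≤ (s'.biUnion t).card := by rw [hSC] at hnScard; exact hnScard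
        _ < s'.card := hs'
        _ = C.ncard := by rw [← hScard, hSC]
    · exfalso
      have hpt := hPT S (ssubset_of_subset_of_ne hSsub hSC)
      have := keyge S hpt
      omega
  -- |C| = k + 1
  have hCcard : C.ncard = k + 1 := by
    have hpos : 0 < C.ncard := (Set.ncard_pos hCfin).mpr hCne
    obtain ⟨x, hx⟩ := id hCne
    have hmem : C.ncard - 1 ∈ {n | ∃ I, I ⊆ C ∧ M.Indep I ∧ I.ncard = n} := by
      refine ⟨C \ {x}, Set.diff_subset, hC.2.2 _ ?_, ?_⟩
      · exact Set.sdiff_singleton_ssubset.mpr hx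
      · exact Set.ncard_diff_singleton_of_mem hx
    have hub : ∀ n ∈ {n | ∃ I, I ⊆ C ∧ M.Indep I ∧ I.ncard = n}, n ≤ C.ncard - 1 := by
      rintro n ⟨I, hIC, hIindep, rfl⟩
      have hIne : I ≠ C := fun h => hCdep (h ▸ hIindep)
      have : I.ncard < C.ncard :=
        Set.ncard_lt_ncard (ssubset_of_subset_of_ne hIC hIne) hCfin
      omega
    have hrk : rk M C = C.ncard - 1 := by
      unfold rk
      exact le_antisymm (csSup_le ⟨_, hmem⟩ hub) (le_csSup ⟨_, hub⟩ hmem)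
    omega
  -- lower bound: for x ∈ C, k ≤ |n(C \ {x})|
  have hlow : ∀ x ∈ C, k ≤ {i : Fin s | ((C \ {x}) ∩ D i).Nonempty}.ncard := by
    intro x hx
    have hss : C \ {x} ⊂ C := Set.sdiff_singleton_ssubset.mpr hx
    have := keyge _ (hPT _ hss)
    have hcard : (C \ {x}).ncard = k := by
      rw [Set.ncard_diff_singleton_of_mem hx, hCcard]
      omega
    omega
  obtain ⟨x, hx⟩ := hCne
  have hmono : {i : Fin s | ((C \ {x}) ∩ D i).Nonempty} ⊆ {i : Fin s | (C ∩ D i).Nonempty} := by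
    rintro i ⟨y, hy, hyD⟩
    exact ⟨y, hy.1, hyD⟩
  have hnC : {i : Fin s | (C ∩ D i).Nonempty}.ncard = k := by
    have h1 : k ≤ {i : Fin s | (C ∩ D i).Nonempty}.ncard :=
      le_trans (hlow x hx) (Set.ncard_le_ncard hmono (Set.toFinite _))
    omega
  refine ⟨hnC, fun y hy => ?_⟩
  have hmono' : {i : Fin s | ((C \ {y}) ∩ D i).Nonempty} ⊆ {i : Fin s | (C ∩ D i).Nonempty} := by
    rintro i ⟨z, hz, hzD⟩
    exact ⟨z, hz.1, hzD⟩
  have := Set.ncard_le_ncard hmono' (Set.toFinite _)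
  have := hlow y hy
  omega
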